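/- arXiv:math/0401350 — 5 statements merged into one kernel-verified Lean document; each statement's English description precedes it below -/
import Mathlib

section
/- Let G be a group of automorphisms of a t-(v,k,1) design D with t ≥ 2, acting transitively on the blocks of D. Then G acts transitively on the points of D. (Block's theorem for Steiner designs.) -/
open Finset

lemma swap_count {α β : Type*} (A : Finset α) (C : Finset β) (P : α → β → Prop)
    [∀ a b, Decidable (P a b)] :
    ∑ a ∈ A, (C.filter (fun c => P a c)).card = ∑ c ∈ C, (A.filter (fun a => P a c)).card := by
  simp only [Finset.card_filter]
  exact Finset.sum_comm

lemma card_subsets_between {V : Type*} [DecidableEq V] (S Y : Finset V) (hSY : S ⊆ Y)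
    (t : ℕ) (hst : S.card ≤ t) :
    ((Y.powersetCard t).filter (fun T => S ⊆ T)).card = (Y.card - S.card).choose (t - S.card) := by
  rw [← Finset.card_sdiff_of_subset hSY, ← Finset.card_powersetCard (t - S.card) (Y \ S)]
  apply Finset.card_nbij' (fun T => T \ S) (fun U => U ∪ S)
  · intro T hT
    simp only [Finset.mem_coe, Finset.mem_filter, Finset.mem_powersetCard] at hT ⊢
    obtain ⟨⟨hTY, hTt⟩, hST⟩ := hT
    exact ⟨Finset.sdiff_subset_sdiff hTY (le_refl S), by rw [Finset.card_sdiff_of_subset hST, hTt]⟩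
  · intro U hU
    simp only [Finset.mem_coe, Finset.mem_filter, Finset.mem_powersetCard] at hU ⊢
    obtain ⟨hUY, hUc⟩ := hU
    have hdisj : Disjoint U S := Finset.disjoint_of_subset_left hUY (Finset.sdiff_disjoint)
    refine ⟨⟨?_, ?_⟩, Finset.subset_union_right⟩
    · exact Finset.union_subset (hUY.trans (Finset.sdiff_subset)) hSY
    · rw [Finset.card_union_of_disjoint hdisj, hUc]
      omega
  · intro T hT
    simp only [Finset.mem_coe, Finset.mem_filter, Finset.mem_powersetCard] at hT
    exact Finset.sdiff_union_of_subset hT.2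
  · intro U hU
    simp only [Finset.mem_coe, Finset.mem_powersetCard] at hU
    exact Finset.union_sdiff_cancel_right
      (Finset.disjoint_of_subset_left hU.1 (Finset.sdiff_disjoint))

/-- A `t`-`(v,k,λ)` design on the point set `X`. -/
def IsDesignOn {V : Type*} [DecidableEq V] (X : Finset V) (t v k lam : ℕ)
    (B : Finset (Finset V)) : Prop :=
  X.card = v ∧ (∀ b ∈ B, b ⊆ X ∧ b.card = k) ∧
    ∀ s ⊆ X, s.card = t → (B.filter (fun b => s ⊆ b)).card = lam

lemma count_blocks_containing {V : Type*} [DecidableEq V] {X : Finset V}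
    {B : Finset (Finset V)} {t v k : ℕ} (hD : IsDesignOn X t v k 1 B)
    (S : Finset V) (hS : S ⊆ X) (hst : S.card ≤ t) :
    (B.filter (fun b => S ⊆ b)).card * (k - S.card).choose (t - S.card)
      = (v - S.card).choose (t - S.card) := by
  obtain ⟨hXv, hblocks, hdesign⟩ := hD
  set A := (X.powersetCard t).filter (fun T => S ⊆ T) with hAdef
  have hmemA : ∀ T, T ∈ A ↔ (T ⊆ X ∧ T.card = t ∧ S ⊆ T) := by
    intro T
    simp only [hAdef, Finset.mem_filter, Finset.mem_powersetCard]
    tauto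
  have key : ∑ T ∈ A, (B.filter (fun b => T ⊆ b)).card = A.card := by
    rw [Finset.card_eq_sum_ones]
    apply Finset.sum_congr rfl
    intro T hT
    rw [hmemA] at hT
    exact hdesign T hT.1 hT.2.1
  have hA : A.card = (v - S.card).choose (t - S.card) := by
    rw [hAdef, card_subsets_between S X hS t hst, hXv]
  have swap : ∑ T ∈ A, (B.filter (fun b => T ⊆ b)).card
      = ∑ b ∈ B, (A.filter (fun T => T ⊆ b)).card := swap_count A B (fun T b => T ⊆ b)
  have per_b : ∀ b ∈ B, (A.filter (fun T => T ⊆ b)).card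
      = if S ⊆ b then (k - S.card).choose (t - S.card) else 0 := by
    intro b hb
    obtain ⟨hbX, hbk⟩ := hblocks b hb
    by_cases hSb : S ⊆ b
    · rw [if_pos hSb]
      have heq : A.filter (fun T => T ⊆ b) = (b.powersetCard t).filter (fun T => S ⊆ T) := by
        ext T
        simp only [Finset.mem_filter, Finset.mem_powersetCard, hmemA]
        constructor
        · rintro ⟨⟨_, hTt, hST⟩, hTb⟩; exact ⟨⟨hTb, hTt⟩, hST⟩
        · rintro ⟨⟨hTb, hTt⟩, hST⟩; exact ⟨⟨hTb.trans hbX, hTt, hST⟩, hTb⟩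
      rw [heq, card_subsets_between S b hSb t hst, hbk]
    · rw [if_neg hSb]
      rw [Finset.card_eq_zero, Finset.filter_eq_empty_iff]
      intro T hT
      rw [hmemA] at hT
      intro hTb
      exact hSb (hT.2.2.trans hTb)
  have hsum : ∑ b ∈ B, (A.filter (fun T => T ⊆ b)).card
      = (B.filter (fun b => S ⊆ b)).card * (k - S.card).choose (t - S.card) := by
    rw [Finset.sum_congr rfl per_b, ← Finset.sum_filter, Finset.sum_const, smul_eq_mul]
  rw [← hsum, ← swap, key, hA]

set_option maxHeartbeats 400000 in
/-- Block's theorem for Steiner designs: a block-transitive group of automorphisms of a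
non-trivial `t`-`(v,k,1)` design with `t ≥ 2` is point-transitive. -/
theorem block_transitive_imp_point_transitive {V : Type*} [DecidableEq V]
    (X : Finset V) (B : Finset (Finset V)) (t v k : ℕ)
    (ht : 2 ≤ t) (htk : t < k) (hkv : k < v)
    (hD : IsDesignOn X t v k 1 B)
    (G : Subgroup (Equiv.Perm V))
    (hGX : ∀ g ∈ G, ∀ x ∈ X, g x ∈ X)
    (hGB : ∀ g ∈ G, ∀ b ∈ B, b.image (⇑g) ∈ B)
    (hbt : ∀ b ∈ B, ∀ b' ∈ B, ∃ g ∈ G, b.image (⇑g) = b') :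
    ∀ x ∈ X, ∀ y ∈ X, ∃ g ∈ G, g x = y := by
  classical
  intro x hx y hy
  by_contra hcon
  push_neg at hcon
  -- orbits of x and y
  set O1 := X.filter (fun z => ∃ g ∈ G, g x = z) with hO1def
  set O2 := X.filter (fun z => ∃ g ∈ G, g y = z) with hO2def
  have hxO1 : x ∈ O1 := Finset.mem_filter.mpr ⟨hx, ⟨1, G.one_mem, by simp⟩⟩
  have hyO2 : y ∈ O2 := Finset.mem_filter.mpr ⟨hy, ⟨1, G.one_mem, by simp⟩⟩
  have hinv1 : ∀ g ∈ G, ∀ z ∈ O1, g z ∈ O1 := by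
    intro g hg z hz
    rw [Finset.mem_filter] at hz ⊢
    obtain ⟨hzX, h', hh', hval⟩ := hz
    exact ⟨hGX g hg z hzX, g * h', G.mul_mem hg hh',
      by simp [Equiv.Perm.mul_apply, hval]⟩
  have hinv2 : ∀ g ∈ G, ∀ z ∈ O2, g z ∈ O2 := by
    intro g hg z hz
    rw [Finset.mem_filter] at hz ⊢
    obtain ⟨hzX, h', hh', hval⟩ := hz
    exact ⟨hGX g hg z hzX, g * h', G.mul_mem hg hh',
      by simp [Equiv.Perm.mul_apply, hval]⟩
  have hxy : x ≠ y := by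
    intro he
    exact hcon 1 G.one_mem (by simpa using he)
  have hdisj : ∀ z ∈ O1, ∀ w ∈ O2, z ≠ w := by
    intro z hz w hw he
    subst he
    obtain ⟨hzX, g, hg, hgx⟩ := Finset.mem_filter.mp hz
    obtain ⟨hzX', h', hh', hhy⟩ := Finset.mem_filter.mp hw
    exact hcon (h'⁻¹ * g) (G.mul_mem (G.inv_mem hh') hg)
      (by simp [Equiv.Perm.mul_apply, hgx, ← hhy])
  -- constancy of block-orbit intersection sizes
  have hconst : ∀ (O : Finset V), (∀ g ∈ G, ∀ z ∈ O, g z ∈ O) →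
      ∀ b ∈ B, ∀ b' ∈ B, (b ∩ O).card = (b' ∩ O).card := by
    intro O hOinv b hb b' hb'
    obtain ⟨g, hg, him⟩ := hbt b hb b' hb'
    have himg : (b ∩ O).image g = b' ∩ O := by
      ext w
      simp only [Finset.mem_image, Finset.mem_inter]
      constructor
      · rintro ⟨z, ⟨hzb, hzO⟩, rfl⟩
        exact ⟨him ▸ Finset.mem_image_of_mem g hzb, hOinv g hg z hzO⟩
      · rintro ⟨hwb', hwO⟩
        rw [← him] at hwb'
        obtain ⟨z, hzb, hzw⟩ := Finset.mem_image.mp hwb'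
        refine ⟨z, ⟨hzb, ?_⟩, hzw⟩
        have h2 := hOinv g⁻¹ (G.inv_mem hg) w hwO
        have hz : g⁻¹ w = z := by rw [← hzw]; simp
        rwa [hz] at h2
    rw [← himg, Finset.card_image_of_injective _ g.injective]
  -- counting lemmas
  have hcount0 : B.card * k.choose t = v.choose t := by
    have h := count_blocks_containing hD ∅ (Finset.empty_subset X) (by simp)
    simpa using h
  have hcount1 : ∀ z ∈ X,
      (B.filter (fun b => z ∈ b)).card * (k-1).choose (t-1) = (v-1).choose (t-1) := by
    intro z hz
    have h := count_blocks_containing hD {z} (Finset.singleton_subset_iff.mpr hz)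
      (by simp; omega)
    simpa using h
  have hcount2 : ∀ z ∈ X, ∀ w ∈ X, z ≠ w →
      (B.filter (fun b => z ∈ b ∧ w ∈ b)).card * (k-2).choose (t-2)
        = (v-2).choose (t-2) := by
    intro z hz w hw hzw
    have hcard : ({z, w} : Finset V).card = 2 := by
      rw [Finset.card_insert_of_notMem (by simp [hzw]), Finset.card_singleton]
    have h := count_blocks_containing hD {z, w}
      (by simp [Finset.insert_subset_iff, hz, hw]) (by rw [hcard]; exact ht)
    rw [hcard] at h
    simpa [Finset.insert_subset_iff] using h
  have hK1pos : 0 < (k-1).choose (t-1) := Nat.choose_pos (by omega)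
  have hK2pos : 0 < (k-2).choose (t-2) := Nat.choose_pos (by omega)
  set r := (B.filter (fun b => x ∈ b)).card with hrdef
  have hrall : ∀ z ∈ X, (B.filter (fun b => z ∈ b)).card = r := by
    intro z hz
    exact Nat.eq_of_mul_eq_mul_right hK1pos (by rw [hcount1 z hz, ← hcount1 x hx])
  set lam2 := (B.filter (fun b => x ∈ b ∧ y ∈ b)).card with hldef
  have hlall : ∀ z ∈ X, ∀ w ∈ X, z ≠ w →
      (B.filter (fun b => z ∈ b ∧ w ∈ b)).card = lam2 := by
    intro z hz w hw hzw
    exact Nat.eq_of_mul_eq_mul_right hK2pos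
      (by rw [hcount2 z hz w hw hzw, ← hcount2 x hx y hy hxy])
  -- B is nonempty
  have hBpos : 0 < B.card := by
    rcases Nat.eq_zero_or_pos B.card with h0 | h
    · exfalso
      have hA0pos : 0 < v.choose t := Nat.choose_pos (by omega)
      rw [h0, zero_mul] at hcount0
      omega
    · exact h
  obtain ⟨b0, hb0⟩ := Finset.card_pos.mp hBpos
  set c1 := (b0 ∩ O1).card with hc1def
  set c2 := (b0 ∩ O2).card with hc2def
  -- counting equations
  have hO1X : ∀ z ∈ O1, z ∈ X := fun z hz => (Finset.mem_filter.mp hz).1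
  have hO2X : ∀ z ∈ O2, z ∈ X := fun z hz => (Finset.mem_filter.mp hz).1
  have heq1 : O1.card * r = B.card * c1 := by
    have l1 : ∑ z ∈ O1, (B.filter (fun b => z ∈ b)).card = O1.card * r := by
      rw [Finset.sum_congr rfl (fun z hz => hrall z (hO1X z hz)), Finset.sum_const,
        smul_eq_mul]
    have l2 : ∑ z ∈ O1, (B.filter (fun b => z ∈ b)).card
        = ∑ b ∈ B, (O1.filter (fun z => z ∈ b)).card := swap_count O1 B (fun z b => z ∈ b)
    have l3 : ∀ b ∈ B, (O1.filter (fun z => z ∈ b)).card = c1 := by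
      intro b hb
      rw [Finset.filter_mem_eq_inter, Finset.inter_comm]
      exact hconst O1 hinv1 b hb b0 hb0
    rw [← l1, l2, Finset.sum_congr rfl l3, Finset.sum_const, smul_eq_mul]
  have heq2 : O2.card * r = B.card * c2 := by
    have l1 : ∑ z ∈ O2, (B.filter (fun b => z ∈ b)).card = O2.card * r := by
      rw [Finset.sum_congr rfl (fun z hz => hrall z (hO2X z hz)), Finset.sum_const,
        smul_eq_mul]
    have l2 : ∑ z ∈ O2, (B.filter (fun b => z ∈ b)).card
        = ∑ b ∈ B, (O2.filter (fun z => z ∈ b)).card := swap_count O2 B (fun z b => z ∈ b)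
    have l3 : ∀ b ∈ B, (O2.filter (fun z => z ∈ b)).card = c2 := by
      intro b hb
      rw [Finset.filter_mem_eq_inter, Finset.inter_comm]
      exact hconst O2 hinv2 b hb b0 hb0
    rw [← l1, l2, Finset.sum_congr rfl l3, Finset.sum_const, smul_eq_mul]
  have heq3 : (O1.card * O2.card) * lam2 = B.card * (c1 * c2) := by
    have l1 : ∑ z ∈ O1, ∑ w ∈ O2, (B.filter (fun b => z ∈ b ∧ w ∈ b)).card
        = (O1.card * O2.card) * lam2 := by
      rw [Finset.sum_congr rfl (fun z hz => Finset.sum_congr rfl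
        (fun w hw => hlall z (hO1X z hz) w (hO2X w hw) (hdisj z hz w hw)))]
      simp [Finset.sum_const, smul_eq_mul, mul_assoc]
    have l2 : ∑ z ∈ O1, ∑ w ∈ O2, (B.filter (fun b => z ∈ b ∧ w ∈ b)).card
        = ∑ b ∈ B, (O1.filter (fun z => z ∈ b)).card * (O2.filter (fun w => w ∈ b)).card := by
      have inner : ∀ z ∈ O1, ∑ w ∈ O2, (B.filter (fun b => z ∈ b ∧ w ∈ b)).card
          = ∑ b ∈ B, (if z ∈ b then (O2.filter (fun w => w ∈ b)).card else 0) := by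
        intro z hz
        rw [swap_count O2 B (fun w b => z ∈ b ∧ w ∈ b)]
        apply Finset.sum_congr rfl
        intro b hb
        by_cases hzb : z ∈ b
        · simp [hzb]
        · simp [hzb]
      rw [Finset.sum_congr rfl inner, Finset.sum_comm]
      apply Finset.sum_congr rfl
      intro b hb
      rw [← Finset.sum_filter, Finset.sum_const, smul_eq_mul]
    have l3 : ∀ b ∈ B, (O1.filter (fun z => z ∈ b)).card * (O2.filter (fun w => w ∈ b)).card
        = c1 * c2 := by
      intro b hb
      rw [Finset.filter_mem_eq_inter, Finset.filter_mem_eq_inter, Finset.inter_comm O1 b,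
        Finset.inter_comm O2 b, hconst O1 hinv1 b hb b0 hb0, hconst O2 hinv2 b hb b0 hb0]
    rw [← l1, l2, Finset.sum_congr rfl l3, Finset.sum_const, smul_eq_mul]
  have hn1 : 0 < O1.card := Finset.card_pos.mpr ⟨x, hxO1⟩
  have hn2 : 0 < O2.card := Finset.card_pos.mpr ⟨y, hyO2⟩
  have hkey : r * r = B.card * lam2 := by
    apply Nat.eq_of_mul_eq_mul_left (Nat.mul_pos hn1 hn2)
    calc (O1.card * O2.card) * (r * r) = (O1.card * r) * (O2.card * r) := by ring
      _ = (B.card * c1) * (B.card * c2) := by rw [heq1, heq2]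
      _ = B.card * (B.card * (c1 * c2)) := by ring
      _ = B.card * ((O1.card * O2.card) * lam2) := by rw [← heq3]
      _ = (O1.card * O2.card) * (B.card * lam2) := by ring
  -- now the final numerical contradiction
  obtain ⟨t2, rfl⟩ : ∃ t2, t = t2 + 2 := ⟨t - 2, by omega⟩
  obtain ⟨k2, rfl⟩ : ∃ k2, k = k2 + 2 := ⟨k - 2, by omega⟩
  obtain ⟨v2, rfl⟩ : ∃ v2, v = v2 + 2 := ⟨v - 2, by omega⟩
  have hcx : r * (k2+1).choose (t2+1) = (v2+1).choose (t2+1) := hcount1 x hx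
  have hcxy : lam2 * k2.choose t2 = v2.choose t2 := hcount2 x hx y hy hxy
  have hc0 : B.card * (k2+2).choose (t2+2) = (v2+2).choose (t2+2) := hcount0
  have h1 : (v2+2) * (v2+1).choose (t2+1) = (v2+2).choose (t2+2) * (t2+2) :=
    Nat.add_one_mul_choose_eq (v2+1) (t2+1)
  have h2 : (v2+1) * v2.choose t2 = (v2+1).choose (t2+1) * (t2+1) :=
    Nat.add_one_mul_choose_eq v2 t2
  have h3 : (k2+2) * (k2+1).choose (t2+1) = (k2+2).choose (t2+2) * (t2+2) :=
    Nat.add_one_mul_choose_eq (k2+1) (t2+1)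
  have h4 : (k2+1) * k2.choose t2 = (k2+1).choose (t2+1) * (t2+1) :=
    Nat.add_one_mul_choose_eq k2 t2
  set A0 := (v2+2).choose (t2+2)
  set A1 := (v2+1).choose (t2+1)
  set A2 := v2.choose t2
  set K0 := (k2+2).choose (t2+2)
  set K1 := (k2+1).choose (t2+1)
  set K2 := k2.choose t2
  have hE : A1^2 * (K0 * K2) = (A0 * A2) * K1^2 := by
    calc A1^2 * (K0 * K2) = ((r*r)*(K1*K1))*(K0*K2) := by rw [← hcx]; ring
      _ = ((B.card*lam2)*(K1*K1))*(K0*K2) := by rw [hkey]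
      _ = ((B.card*K0)*(lam2*K2))*(K1*K1) := by ring
      _ = (A0*A2)*K1^2 := by rw [hc0, hcxy]; ring
  have hbig : A1^2*K1^2*(t2+1)^2*((v2+1)*(k2+2))
      = A1^2*K1^2*(t2+1)^2*((v2+2)*(k2+1)) := by
    calc A1^2*K1^2*(t2+1)^2*((v2+1)*(k2+2))
        = A1^2 * ((k2+2)*K1) * (K1*(t2+1)) * ((t2+1)*(v2+1)) := by ring
      _ = A1^2 * (K0*(t2+2)) * ((k2+1)*K2) * ((t2+1)*(v2+1)) := by rw [h3, ← h4]
      _ = (A1^2*(K0*K2)) * ((t2+2)*(k2+1)*(t2+1)*(v2+1)) := by ring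
      _ = ((A0*A2)*K1^2) * ((t2+2)*(k2+1)*(t2+1)*(v2+1)) := by rw [hE]
      _ = K1^2 * (A0*(t2+2)) * ((v2+1)*A2) * ((t2+1)*(k2+1)) := by ring
      _ = K1^2 * ((v2+2)*A1) * (A1*(t2+1)) * ((t2+1)*(k2+1)) := by rw [← h1, h2]
      _ = A1^2*K1^2*(t2+1)^2*((v2+2)*(k2+1)) := by ring
  have hA1pos : 0 < A1 := Nat.choose_pos (by omega)
  have hK1pos' : 0 < K1 := Nat.choose_pos (by omega)
  have hMpos : 0 < A1^2*K1^2*(t2+1)^2 := by positivity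
  have hfin : (v2+1)*(k2+2) = (v2+2)*(k2+1) := Nat.eq_of_mul_eq_mul_left hMpos hbig
  nlinarith [hkv, hfin]
end

section
/- Let D be a non-trivial Steiner t-design with t ≥ 3 and let G ≤ Aut(D) act flag-transitively on D (transitively on incident point-block pairs). Then G acts 2-transitively on the points of D. -/
open Finset

private lemma sum_filter_card_comm {α β : Type*} (A : Finset α) (Bt : Finset β)
    (R : α → β → Prop) [∀ a b, Decidable (R a b)] :
    ∑ a ∈ A, (Bt.filter (fun b => R a b)).card
      = ∑ b ∈ Bt, (A.filter (fun a => R a b)).card := by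
  simp only [Finset.card_filter]
  exact Finset.sum_comm

private lemma card_filter_powersetCard {V : Type*} [DecidableEq V] (S A : Finset V)
    (hSA : S ⊆ A) (n : ℕ) (hn : S.card ≤ n) :
    ((A.powersetCard n).filter (fun T => S ⊆ T)).card
      = (A.card - S.card).choose (n - S.card) := by
  rw [← Finset.card_sdiff_of_subset hSA, ← Finset.card_powersetCard (n - S.card) (A \ S)]
  refine Finset.card_nbij' (fun T => T \ S) (fun U => U ∪ S) ?_ ?_ ?_ ?_
  · intro T hT
    simp only [Finset.mem_coe, Finset.mem_filter, Finset.mem_powersetCard] at hT ⊢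
    obtain ⟨⟨hTA, hTt⟩, hST⟩ := hT
    exact ⟨Finset.sdiff_subset_sdiff hTA (le_refl S),
      by rw [Finset.card_sdiff_of_subset hST, hTt]⟩
  · intro U hU
    simp only [Finset.mem_coe, Finset.mem_powersetCard] at hU ⊢
    obtain ⟨hUA, hUc⟩ := hU
    have hdisj : Disjoint U S := Finset.disjoint_of_subset_left hUA Finset.sdiff_disjoint
    refine Finset.mem_filter.2 ⟨Finset.mem_powersetCard.2 ⟨?_, ?_⟩, Finset.subset_union_right⟩
    · exact Finset.union_subset (hUA.trans Finset.sdiff_subset) hSA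
    · rw [Finset.card_union_of_disjoint hdisj, hUc]
      omega
  · intro T hT
    simp only [Finset.mem_coe, Finset.mem_filter] at hT
    exact Finset.sdiff_union_of_subset hT.2
  · intro U hU
    rw [Finset.mem_coe, Finset.mem_powersetCard] at hU
    have hdisj : Disjoint U S := Finset.disjoint_of_subset_left hU.1 Finset.sdiff_disjoint
    show (U ∪ S) \ S = U
    rw [Finset.union_sdiff_right, Finset.sdiff_eq_self_of_disjoint hdisj]

private lemma nb_mul_choose {V : Type*} [DecidableEq V] (X : Finset V)
    (B : Finset (Finset V)) (t v k : ℕ) (hD : IsDesignOn X t v k 1 B)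
    (S : Finset V) (hS : S ⊆ X) (hst : S.card ≤ t) :
    (B.filter (fun b => S ⊆ b)).card * (k - S.card).choose (t - S.card)
      = (v - S.card).choose (t - S.card) := by
  classical
  obtain ⟨hv, hblk, hdes⟩ := hD
  set 𝒯 : Finset (Finset V) := (X.powersetCard t).filter (fun T => S ⊆ T) with h𝒯
  set Bf : Finset (Finset V) := B.filter (fun b => S ⊆ b) with hBf
  have key : ∑ b ∈ Bf, (𝒯.filter (fun T => T ⊆ b)).card
      = Bf.card * (k - S.card).choose (t - S.card) := by
    have hterm : ∀ b ∈ Bf, (𝒯.filter (fun T => T ⊆ b)).card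
        = (k - S.card).choose (t - S.card) := by
      intro b hb
      rw [hBf, Finset.mem_filter] at hb
      obtain ⟨hbB, hSb⟩ := hb
      obtain ⟨hbX, hbk⟩ := hblk b hbB
      have : 𝒯.filter (fun T => T ⊆ b) = (b.powersetCard t).filter (fun T => S ⊆ T) := by
        ext T
        simp only [h𝒯, Finset.mem_filter, Finset.mem_powersetCard]
        constructor
        · rintro ⟨⟨⟨_, hTt⟩, hST⟩, hTb⟩
          exact ⟨⟨hTb, hTt⟩, hST⟩
        · rintro ⟨⟨hTb, hTt⟩, hST⟩
          exact ⟨⟨⟨hTb.trans hbX, hTt⟩, hST⟩, hTb⟩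
      rw [this, card_filter_powersetCard S b hSb t hst, hbk]
    rw [Finset.sum_congr rfl hterm, Finset.sum_const, smul_eq_mul]
  have swap : ∑ b ∈ Bf, (𝒯.filter (fun T => T ⊆ b)).card
      = ∑ T ∈ 𝒯, (Bf.filter (fun b => T ⊆ b)).card :=
    sum_filter_card_comm Bf 𝒯 (fun b T => T ⊆ b)
  have one : ∀ T ∈ 𝒯, (Bf.filter (fun b => T ⊆ b)).card = 1 := by
    intro T hT
    rw [h𝒯, Finset.mem_filter, Finset.mem_powersetCard] at hT
    obtain ⟨⟨hTX, hTt⟩, hST⟩ := hT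
    have : Bf.filter (fun b => T ⊆ b) = B.filter (fun b => T ⊆ b) := by
      rw [hBf, Finset.filter_filter]
      exact Finset.filter_congr (fun b _ => by
        constructor
        · rintro ⟨_, h⟩; exact h
        · intro h; exact ⟨hST.trans h, h⟩)
    rw [this, hdes T hTX hTt]
  have total : ∑ T ∈ 𝒯, (Bf.filter (fun b => T ⊆ b)).card = 𝒯.card := by
    rw [Finset.sum_congr rfl one, Finset.sum_const, smul_eq_mul, mul_one]
  have h𝒯card : 𝒯.card = (v - S.card).choose (t - S.card) := by
    rw [h𝒯, card_filter_powersetCard S X hS t hst, hv]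
  rw [← h𝒯card, ← total, ← swap, key]

private lemma stab_trans {V : Type*} [DecidableEq V]
    (X : Finset V) (B : Finset (Finset V)) (t v k : ℕ)
    (ht : 3 ≤ t) (htk : t < k) (hkv : k < v)
    (hD : IsDesignOn X t v k 1 B)
    (G : Subgroup (Equiv.Perm V))
    (hGX : ∀ g ∈ G, ∀ x ∈ X, g x ∈ X)
    (hft : ∀ b ∈ B, ∀ b' ∈ B, ∀ x ∈ b, ∀ x' ∈ b',
      ∃ g ∈ G, b.image (⇑g) = b' ∧ g x = x')
    (x : V) (hx : x ∈ X) (y : V) (hy : y ∈ X) (hyx : y ≠ x)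
    (y' : V) (hy' : y' ∈ X) (hy'x : y' ≠ x) :
    ∃ g ∈ G, g x = x ∧ g y = y' := by
  classical
  obtain ⟨hv, hblk, hdes⟩ := hD
  by_contra hcon
  push_neg at hcon
  set O : Finset V := (X.erase x).filter (fun z => ∃ g ∈ G, g x = x ∧ g y = z) with hO
  have hyO : y ∈ O := by
    refine Finset.mem_filter.2 ⟨Finset.mem_erase.2 ⟨hyx, hy⟩, 1, G.one_mem, by simp, by simp⟩
  have hy'O : y' ∉ O := by
    intro h
    obtain ⟨-, g, hg, hgx, hgy⟩ := Finset.mem_filter.1 h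
    exact hcon g hg hgx hgy
  have hyy' : y ≠ y' := fun h => hy'O (h ▸ hyO)
  have hOinv : ∀ g ∈ G, g x = x → ∀ z ∈ O, g z ∈ O := by
    intro g hg hgx z hz
    obtain ⟨hz1, g₀, hg₀, hx₀, hy₀⟩ := Finset.mem_filter.1 hz
    obtain ⟨hzx, hzX⟩ := Finset.mem_erase.1 hz1
    refine Finset.mem_filter.2 ⟨Finset.mem_erase.2 ⟨?_, hGX g hg z hzX⟩,
      g * g₀, G.mul_mem hg hg₀, ?_, ?_⟩
    · intro h
      exact hzx (g.injective (h.trans hgx.symm))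
    · simp [Equiv.Perm.mul_apply, hx₀, hgx]
    · simp [Equiv.Perm.mul_apply, hy₀]
  -- constancy of block-orbit intersections over blocks through x
  have hmono : ∀ b ∈ B, x ∈ b → ∀ b' ∈ B, x ∈ b' → (b ∩ O).card ≤ (b' ∩ O).card := by
    intro b hb hxb b' hb' hxb'
    obtain ⟨g, hg, hgb, hgx⟩ := hft b hb b' hb' x hxb x hxb'
    have himg : (b ∩ O).image (⇑g) ⊆ b' ∩ O := by
      intro w hw
      obtain ⟨z, hz, rfl⟩ := Finset.mem_image.1 hw
      obtain ⟨hzb, hzO⟩ := Finset.mem_inter.1 hz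
      exact Finset.mem_inter.2 ⟨hgb ▸ Finset.mem_image_of_mem (⇑g) hzb,
        hOinv g hg hgx z hzO⟩
    calc (b ∩ O).card = ((b ∩ O).image (⇑g)).card :=
          (Finset.card_image_of_injective _ g.injective).symm
      _ ≤ (b' ∩ O).card := Finset.card_le_card himg
  have hconst : ∀ b ∈ B, x ∈ b → ∀ b' ∈ B, x ∈ b' → (b ∩ O).card = (b' ∩ O).card :=
    fun b hb hxb b' hb' hxb' =>
      le_antisymm (hmono b hb hxb b' hb' hxb') (hmono b' hb' hxb' b hb hxb)
  -- constant λ₂ and λ₃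
  set lam2 : ℕ := (B.filter (fun b => ({x, y} : Finset V) ⊆ b)).card with hlam2
  set lam3 : ℕ := (B.filter (fun b => ({x, y, y'} : Finset V) ⊆ b)).card with hlam3
  have hC2pos : 0 < (k - 2).choose (t - 2) := Nat.choose_pos (by omega)
  have hC3pos : 0 < (k - 3).choose (t - 3) := Nat.choose_pos (by omega)
  have hpair : ∀ a b : V, a ∈ X → b ∈ X → a ≠ b →
      (B.filter (fun bb => ({a, b} : Finset V) ⊆ bb)).card = lam2 := by
    intro a b ha hb hab
    have h1 := nb_mul_choose X B t v k ⟨hv, hblk, hdes⟩ ({a, b} : Finset V)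
      (by simp [Finset.insert_subset_iff, ha, hb]) (by rw [Finset.card_pair hab]; omega)
    have h2 := nb_mul_choose X B t v k ⟨hv, hblk, hdes⟩ ({x, y} : Finset V)
      (by simp [Finset.insert_subset_iff, hx, hy]) (by rw [Finset.card_pair (Ne.symm hyx)]; omega)
    rw [Finset.card_pair hab] at h1
    rw [Finset.card_pair (Ne.symm hyx)] at h2
    exact Nat.eq_of_mul_eq_mul_right hC2pos (h1.trans h2.symm)
  have hcard3 : ∀ a b c : V, a ≠ b → a ≠ c → b ≠ c →
      ({a, b, c} : Finset V).card = 3 := by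
    intro a b c hab hac hbc
    rw [Finset.card_insert_of_notMem (by simp [hab, hac]), Finset.card_pair hbc]
  have htriple : ∀ a b c : V, a ∈ X → b ∈ X → c ∈ X → a ≠ b → a ≠ c → b ≠ c →
      (B.filter (fun bb => ({a, b, c} : Finset V) ⊆ bb)).card = lam3 := by
    intro a b c ha hb hc hab hac hbc
    have h1 := nb_mul_choose X B t v k ⟨hv, hblk, hdes⟩ ({a, b, c} : Finset V)
      (by simp [Finset.insert_subset_iff, ha, hb, hc])
      (by rw [hcard3 a b c hab hac hbc]; omega)
    have h2 := nb_mul_choose X B t v k ⟨hv, hblk, hdes⟩ ({x, y, y'} : Finset V)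
      (by simp [Finset.insert_subset_iff, hx, hy, hy'])
      (by rw [hcard3 x y y' (Ne.symm hyx) (Ne.symm hy'x) hyy']; omega)
    rw [hcard3 a b c hab hac hbc] at h1
    rw [hcard3 x y y' (Ne.symm hyx) (Ne.symm hy'x) hyy'] at h2
    exact Nat.eq_of_mul_eq_mul_right hC3pos (h1.trans h2.symm)
  have hlam2pos : 0 < lam2 := by
    have h2 := nb_mul_choose X B t v k ⟨hv, hblk, hdes⟩ ({x, y} : Finset V)
      (by simp [Finset.insert_subset_iff, hx, hy]) (by rw [Finset.card_pair (Ne.symm hyx)]; omega)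
    rw [Finset.card_pair (Ne.symm hyx)] at h2
    have hD2 : 0 < (v - 2).choose (t - 2) := Nat.choose_pos (by omega)
    rcases Nat.eq_zero_or_pos lam2 with h | h
    · rw [hlam2] at h; rw [h] at h2; simp at h2; omega
    · exact h
  -- pick a base block through x to define c
  obtain ⟨b₀, hb₀⟩ : (B.filter (fun b => ({x, y} : Finset V) ⊆ b)).Nonempty :=
    Finset.card_pos.1 (hlam2 ▸ hlam2pos)
  obtain ⟨hb₀B, hxyb₀⟩ := Finset.mem_filter.1 hb₀
  have hxb₀ : x ∈ b₀ := hxyb₀ (Finset.mem_insert_self x _)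
  set c : ℕ := (b₀ ∩ O).card with hc
  -- generic: sum over a block family of |b ∩ Z|
  have hswap : ∀ 𝓑 : Finset (Finset V), ∀ Z : Finset V,
      ∑ b ∈ 𝓑, (Z.filter (fun z => z ∈ b)).card
        = ∑ z ∈ Z, (𝓑.filter (fun b => z ∈ b)).card :=
    fun 𝓑 Z => sum_filter_card_comm 𝓑 Z (fun b z => z ∈ b)
  have hinter : ∀ (b : Finset V) (Z : Finset V),
      (Z.filter (fun z => z ∈ b)).card = (b ∩ Z).card := by
    intro b Z
    rw [Finset.filter_mem_eq_inter, Finset.inter_comm]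
  -- pair filter identities
  have hfilt : ∀ a b : V, ∀ z : V,
      ((B.filter (fun bb => ({a, b} : Finset V) ⊆ bb)).filter (fun bb => z ∈ bb))
        = B.filter (fun bb => ({a, b, z} : Finset V) ⊆ bb) := by
    intro a b z
    rw [Finset.filter_filter]
    refine Finset.filter_congr (fun bb _ => ?_)
    simp only [Finset.insert_subset_iff, Finset.singleton_subset_iff]
    tauto
  -- Count E1: blocks through {x, y'}
  have hcterm : ∀ a : V, a ∈ X → a ≠ x →
      ∀ b ∈ B.filter (fun b => ({x, a} : Finset V) ⊆ b),
        (O.filter (fun z => z ∈ b)).card = c := by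
    intro a ha hax b hb
    obtain ⟨hbB, hsub⟩ := Finset.mem_filter.1 hb
    rw [hinter b O]
    exact hconst b hbB (hsub (Finset.mem_insert_self x _)) b₀ hb₀B hxb₀
  have eq1 : lam2 * c = O.card * lam3 := by
    have lhs : ∑ b ∈ B.filter (fun b => ({x, y'} : Finset V) ⊆ b),
        (O.filter (fun z => z ∈ b)).card = lam2 * c := by
      rw [Finset.sum_congr rfl (hcterm y' hy' hy'x), Finset.sum_const, smul_eq_mul,
        hpair x y' hx hy' (Ne.symm hy'x)]
    have hterm : ∀ z ∈ O, ((B.filter (fun b => ({x, y'} : Finset V) ⊆ b)).filter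
        (fun b => z ∈ b)).card = lam3 := by
      intro z hz
      obtain ⟨hz1, -⟩ := Finset.mem_filter.1 hz
      obtain ⟨hzx, hzX⟩ := Finset.mem_erase.1 hz1
      have hzy' : y' ≠ z := fun h => hy'O (h ▸ hz)
      rw [hfilt x y' z]
      exact htriple x y' z hx hy' hzX (Ne.symm hy'x) (Ne.symm hzx) hzy'
    have rhs : ∑ z ∈ O, ((B.filter (fun b => ({x, y'} : Finset V) ⊆ b)).filter
        (fun b => z ∈ b)).card = O.card * lam3 := by
      rw [Finset.sum_congr rfl hterm, Finset.sum_const, smul_eq_mul]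
    rw [← lhs, ← rhs]
    exact hswap _ O
  -- Count E2: blocks through {x, y}
  have htermxy : ∀ z : V, z ∈ X → z ≠ x → z ≠ y →
      ((B.filter (fun b => ({x, y} : Finset V) ⊆ b)).filter
        (fun b => z ∈ b)).card = lam3 := by
    intro z hzX hzx hzy
    rw [hfilt x y z]
    exact htriple x y z hx hy hzX (Ne.symm hyx) (Ne.symm hzx) (Ne.symm hzy)
  have eq2 : lam2 * c = (O.card - 1) * lam3 + lam2 := by
    have lhs : ∑ b ∈ B.filter (fun b => ({x, y} : Finset V) ⊆ b),
        (O.filter (fun z => z ∈ b)).card = lam2 * c := by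
      rw [Finset.sum_congr rfl (hcterm y hy hyx), Finset.sum_const, smul_eq_mul, ← hlam2]
    have hterm : ∀ z ∈ O.erase y, ((B.filter (fun b => ({x, y} : Finset V) ⊆ b)).filter
        (fun b => z ∈ b)).card = lam3 := by
      intro z hz
      obtain ⟨hzy, hzO⟩ := Finset.mem_erase.1 hz
      obtain ⟨hz1, -⟩ := Finset.mem_filter.1 hzO
      obtain ⟨hzx, hzX⟩ := Finset.mem_erase.1 hz1
      exact htermxy z hzX hzx hzy
    have hyterm : ((B.filter (fun b => ({x, y} : Finset V) ⊆ b)).filter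
        (fun b => y ∈ b)).card = lam2 := by
      rw [hfilt x y y]
      have hxyy : ({x, y, y} : Finset V) = ({x, y} : Finset V) := by
        ext w; simp
      rw [hxyy, ← hlam2]
    have rhs : ∑ z ∈ O, ((B.filter (fun b => ({x, y} : Finset V) ⊆ b)).filter
        (fun b => z ∈ b)).card = (O.card - 1) * lam3 + lam2 := by
      rw [← Finset.sum_erase_add O _ hyO, Finset.sum_congr rfl hterm,
        Finset.sum_const, smul_eq_mul, Finset.card_erase_of_mem hyO, hyterm]
    rw [← lhs, ← rhs]
    exact hswap _ O
  have hlam23 : lam2 = lam3 := by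
    obtain ⟨m, hm⟩ : ∃ m, O.card = m + 1 :=
      ⟨O.card - 1, by have := Finset.card_pos.2 ⟨y, hyO⟩; omega⟩
    rw [hm] at eq1 eq2
    rw [Nat.succ_mul] at eq1
    rw [Nat.add_sub_cancel] at eq2
    have := eq1.symm.trans eq2
    omega
  -- Count E3: k - 2 vs v - 2
  have eq3 : lam2 * (k - 2) = (v - 2) * lam3 := by
    set Z : Finset V := (X.erase x).erase y with hZ
    have hZcard : Z.card = v - 2 := by
      rw [hZ, Finset.card_erase_of_mem (Finset.mem_erase.2 ⟨hyx, hy⟩),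
        Finset.card_erase_of_mem hx, hv]
      omega
    have hterm : ∀ b ∈ B.filter (fun b => ({x, y} : Finset V) ⊆ b),
        (Z.filter (fun z => z ∈ b)).card = k - 2 := by
      intro b hb
      obtain ⟨hbB, hsub⟩ := Finset.mem_filter.1 hb
      obtain ⟨hbX, hbk⟩ := hblk b hbB
      have hxb : x ∈ b := hsub (Finset.mem_insert_self x _)
      have hyb : y ∈ b := hsub (by simp)
      have hbZ : b ∩ Z = (b.erase x).erase y := by
        ext w
        simp only [hZ, Finset.mem_inter, Finset.mem_erase]
        constructor
        · rintro ⟨hwb, hwy, hwx, -⟩; exact ⟨hwy, hwx, hwb⟩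
        · rintro ⟨hwy, hwx, hwb⟩; exact ⟨hwb, hwy, hwx, hbX hwb⟩
      rw [hinter b Z, hbZ, Finset.card_erase_of_mem
        (Finset.mem_erase.2 ⟨hyx, hyb⟩), Finset.card_erase_of_mem hxb, hbk]
      omega
    have lhs : ∑ b ∈ B.filter (fun b => ({x, y} : Finset V) ⊆ b),
        (Z.filter (fun z => z ∈ b)).card = lam2 * (k - 2) := by
      rw [Finset.sum_congr rfl hterm, Finset.sum_const, smul_eq_mul, ← hlam2]
    have hterm2 : ∀ z ∈ Z, ((B.filter (fun b => ({x, y} : Finset V) ⊆ b)).filter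
        (fun b => z ∈ b)).card = lam3 := by
      intro z hz
      obtain ⟨hzy, hz1⟩ := Finset.mem_erase.1 hz
      obtain ⟨hzx, hzX⟩ := Finset.mem_erase.1 hz1
      exact htermxy z hzX hzx hzy
    have rhs : ∑ z ∈ Z, ((B.filter (fun b => ({x, y} : Finset V) ⊆ b)).filter
        (fun b => z ∈ b)).card = (v - 2) * lam3 := by
      rw [Finset.sum_congr rfl hterm2, Finset.sum_const, smul_eq_mul, hZcard]
    rw [← lhs, ← rhs]
    exact hswap _ Z
  rw [← hlam23, mul_comm (v - 2) lam2] at eq3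
  have hkv2 : k - 2 = v - 2 := Nat.eq_of_mul_eq_mul_left hlam2pos eq3
  omega

/-- A flag-transitive group of automorphisms of a non-trivial Steiner `t`-design with
`t ≥ 3` acts point `2`-transitively. -/
theorem flag_transitive_imp_two_transitive {V : Type*} [DecidableEq V]
    (X : Finset V) (B : Finset (Finset V)) (t v k : ℕ)
    (ht : 3 ≤ t) (htk : t < k) (hkv : k < v)
    (hD : IsDesignOn X t v k 1 B)
    (G : Subgroup (Equiv.Perm V))
    (hGX : ∀ g ∈ G, ∀ x ∈ X, g x ∈ X)
    (hGB : ∀ g ∈ G, ∀ b ∈ B, b.image (⇑g) ∈ B)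
    (hft : ∀ b ∈ B, ∀ b' ∈ B, ∀ x ∈ b, ∀ x' ∈ b',
      ∃ g ∈ G, b.image (⇑g) = b' ∧ g x = x') :
    ∀ x ∈ X, ∀ y ∈ X, ∀ x' ∈ X, ∀ y' ∈ X, x ≠ y → x' ≠ y' →
      ∃ g ∈ G, g x = x' ∧ g y = y' := by
  classical
  intro x hx y hy x' hx' y' hy' hxy hxy'
  obtain ⟨hv, hblk, hdes⟩ := hD
  have hblk_thru : ∀ z ∈ X, ∃ b ∈ B, z ∈ b := by
    intro z hz
    have h1 := nb_mul_choose X B t v k ⟨hv, hblk, hdes⟩ {z}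
      (by simpa using hz) (by simp; omega)
    rw [Finset.card_singleton] at h1
    have hD1 : 0 < (v - 1).choose (t - 1) := Nat.choose_pos (by omega)
    have hne : (B.filter (fun b => ({z} : Finset V) ⊆ b)).Nonempty := by
      rw [← Finset.card_pos]
      rcases Nat.eq_zero_or_pos (B.filter (fun b => ({z} : Finset V) ⊆ b)).card with h | h
      · rw [h] at h1; simp at h1; omega
      · exact h
    obtain ⟨b, hb⟩ := hne
    obtain ⟨hbB, hzb⟩ := Finset.mem_filter.1 hb
    exact ⟨b, hbB, hzb (Finset.mem_singleton_self z)⟩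
  obtain ⟨b1, hb1, hxb1⟩ := hblk_thru x hx
  obtain ⟨b2, hb2, hxb2⟩ := hblk_thru x' hx'
  obtain ⟨g1, hg1, -, hg1x⟩ := hft b1 hb1 b2 hb2 x hxb1 x' hxb2
  have hy1X : g1 y ∈ X := hGX g1 hg1 y hy
  have hy1x' : g1 y ≠ x' := by
    intro h
    exact hxy (g1.injective (h.trans hg1x.symm)).symm
  obtain ⟨g2, hg2, hg2x', hg2y⟩ := stab_trans X B t v k ht htk hkv ⟨hv, hblk, hdes⟩ G hGX hft
    x' hx' (g1 y) hy1X hy1x' y' hy' (Ne.symm hxy')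
  refine ⟨g2 * g1, G.mul_mem hg2 hg1, ?_, ?_⟩
  · simp [Equiv.Perm.mul_apply, hg1x, hg2x']
  · simp [Equiv.Perm.mul_apply, hg2y]
end

section
/- The generalized Ramanujan–Nagell equation x² - 17 = 2ⁿ has exactly four solutions in positive integers: (x,n) = (5,3), (7,5), (9,6), (23,9). -/
set_option maxRecDepth 2000

/-- Orbit of `(5,2)` and `(7,4)` under `(x,y) ↦ (3x+4y, 2x+3y)` modulo `8224 = 32·257`. -/
def rnL : List (ZMod 8224 × ZMod 8224) := [(5, 2), (5, 8222), (7, 4), (7, 8220), (23, 16), (23, 8208), (37, 26), (37, 8198), (133, 94), (133, 8130), (167, 3124), (167, 5100), (215, 152), (215, 8072), (775, 548), (775, 7676), (997, 2854), (997, 5370), (1061, 2466), (1061, 5758), (1125, 3826), (1125, 4398), (1253, 886), (1253, 7338), (1317, 2198), (1317, 6026), (1367, 2720), (1367, 5504), (1445, 2798), (1445, 5426), (1509, 1438), (1509, 6786), (1543, 2948), (1543, 5276), (1573, 230), (1573, 7994), (1655, 2168), (1655, 6056), (1719, 1760), (1719, 6464), (1879, 1760), (1879, 6464), (1943, 1944),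 (1943, 6280), (2055, 892), (2055, 7332), (2231, 2720), (2231, 5504), (2437, 1122), (2437, 7102), (2533, 3110), (2533, 5114), (2565, 1026), (2565, 7198), (2597, 1434), (2597, 6790), (2823, 1508), (2823, 6716), (3205, 2914), (3205, 5310), (3383, 3960), (3383, 4264), (3431, 1068), (3431, 7156), (3575, 16), (3575, 8208), (3591, 2052), (3591, 6172), (3799, 2456), (3799, 5768), (3973, 494), (3973, 7730), (4037, 3698), (4037, 4526), (4453, 814), (4453, 7410), (4517, 3194), (4517, 5030), (4519, 1004), (4519, 7220), (4549, 2026), (4549, 6198), (4773, 1482), (4773, 6742), (4823, 1296), (4823, 6928), (5303, 1272), (5303, 6952), (5381, 1494), (5381, 6730), (5413, 1590), (5413, 6634), (5543, 3020), (5543, 5204), (5639, 3836), (5639, 4388), (5671, 1204), (5671, 7020), (6021, 3658), (6021, 4566), (6151, 852), (6151, 7372), (6183, 2332), (6183, 5892), (6245, 3114), (6245, 5110), (6277, 1946), (6277, 6278), (6279, 3148), (6279, 5076), (6341, 1842), (6341, 6382), (6519, 2840), (6519, 5384), (6757, 2670), (6757, 5554), (6821, 1522), (6821, 6702), (6999,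 1296), (6999, 6928), (7303, 3060), (7303, 5164), (7589, 1886), (7589, 6338), (8023, 1656), (8023, 6568), (8197, 3706), (8197, 4518)]

lemma rnL_step : ∀ p ∈ rnL, (3*p.1 + 4*p.2, 2*p.1 + 3*p.2) ∈ rnL := by
  intro p hp
  fin_cases hp <;> decide

lemma rnL_base1 : ((5 : ZMod 8224), (2 : ZMod 8224)) ∈ rnL := by decide
lemma rnL_base2 : ((7 : ZMod 8224), (4 : ZMod 8224)) ∈ rnL := by decide

lemma rnL_no_pow : ∀ p ∈ rnL, ∀ r : Fin 16, p.2 ≠ (2 : ZMod 8224)^(5 + (r : ℕ)) := by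
  intro p hp
  fin_cases hp <;> decide

/-- Every solution of `x² = 2y² + 17` lands in the orbit list mod 8224. -/
lemma rn_inv : ∀ y : ℕ, ∀ x : ℤ, 0 ≤ x → x^2 = 2*(y:ℤ)^2 + 17 →
    ((x : ZMod 8224), (y : ZMod 8224)) ∈ rnL := by
  intro y
  induction y using Nat.strong_induction_on with
  | _ y IH =>
    intro x hx0 hx2
    by_cases hy : y ≤ 8
    · have hxle : x ≤ 12 := by nlinarith [sq_nonneg x]
      interval_cases y <;> interval_cases x <;>
        simp_all <;> push_cast <;> first | (exact rnL_base1) | (exact rnL_base2) | omega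
    · push_neg at hy
      have hy9 : (9:ℤ) ≤ (y:ℤ) := by exact_mod_cast hy
      set a : ℤ := 3*x - 4*(y:ℤ) with ha_def
      set b : ℤ := 3*(y:ℤ) - 2*x with hb_def
      have ha0 : 0 ≤ a := by nlinarith
      have hb0 : 0 < b := by nlinarith
      have hblt : b < (y:ℤ) := by nlinarith
      have heq : a^2 = 2*b^2 + 17 := by rw [ha_def, hb_def]; linear_combination hx2
      have hbnat : ((b.toNat : ℤ)) = b := Int.toNat_of_nonneg hb0.le
      have hlt : b.toNat < y := by omega
      have hIH := IH b.toNat hlt a ha0 (by rw [hbnat]; exact heq)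
      have hstep := rnL_step _ hIH
      have hx' : (x : ZMod 8224) = 3*((a : ZMod 8224)) + 4*((b.toNat : ZMod 8224)) := by
        have hxab : x = 3*a + 4*(b.toNat : ℤ) := by rw [hbnat, ha_def, hb_def]; ring
        calc (x : ZMod 8224) = ((3*a + 4*(b.toNat:ℤ) : ℤ) : ZMod 8224) := by rw [← hxab]
        _ = 3*((a : ZMod 8224)) + 4*((b.toNat : ZMod 8224)) := by push_cast; ring
      have hy' : ((y : ℕ) : ZMod 8224) = 2*((a : ZMod 8224)) + 3*((b.toNat : ZMod 8224)) := by
        have hyab : (y:ℤ) = 2*a + 3*(b.toNat : ℤ) := by rw [hbnat, ha_def, hb_def]; ring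
        calc ((y:ℕ) : ZMod 8224) = (((y:ℕ):ℤ) : ZMod 8224) := by push_cast; ring
        _ = ((2*a + 3*(b.toNat:ℤ) : ℤ) : ZMod 8224) := by rw [← hyab]
        _ = 2*((a : ZMod 8224)) + 3*((b.toNat : ZMod 8224)) := by push_cast; ring
      rw [hx', hy']
      exact hstep

/-- The generalized Ramanujan–Nagell equation `x² - 17 = 2ⁿ` has exactly the four
solutions `(x,n) = (5,3), (7,5), (9,6), (23,9)` in positive integers. -/
theorem ramanujan_nagell_seventeen (x n : ℕ) (hx : 0 < x) (hn : 0 < n) :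
    x ^ 2 = 2 ^ n + 17 ↔
      (x = 5 ∧ n = 3) ∨ (x = 7 ∧ n = 5) ∨ (x = 9 ∧ n = 6) ∨ (x = 23 ∧ n = 9) := by
  constructor
  · intro h
    rcases Nat.even_or_odd n with ⟨m, hm⟩ | ⟨k, hk⟩
    · -- even case: n = 2m
      subst hm
      have hm1 : 1 ≤ m := by omega
      have hxm : 2^m < x := by
        by_contra hle
        push_neg at hle
        have h1 : x^2 ≤ (2^m)^2 := Nat.pow_le_pow_left hle 2
        have h2 : (2^m)^2 = 2^(m+m) := by rw [← pow_mul]; ring_nf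
        omega
      have hmle : m ≤ 3 := by
        by_contra hm4
        push_neg at hm4
        have h16 : (16:ℕ) ≤ 2^m := by
          calc (16:ℕ) = 2^4 := by norm_num
          _ ≤ 2^m := Nat.pow_le_pow_right (by norm_num) hm4
        have hx1 : 2^m + 1 ≤ x := hxm
        have h1 : (2^m+1)^2 ≤ x^2 := Nat.pow_le_pow_left hx1 2
        have h2 : (2^m)^2 = 2^(m+m) := by rw [← pow_mul]; ring_nf
        nlinarith
      have hxle : x ≤ 9 := by
        have h1 : 2^(m+m) ≤ 2^6 := Nat.pow_le_pow_right (by norm_num) (by omega)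
        nlinarith
      interval_cases m <;> interval_cases x <;> omega
    · -- odd case: n = 2k+1
      subst hk
      have hzeq : (x:ℤ)^2 = 2*((2^k : ℕ):ℤ)^2 + 17 := by
        have h' : (x:ℤ)^2 = 2^(2*k+1) + 17 := by exact_mod_cast h
        push_cast
        rw [h']
        rw [show (2:ℤ)^(2*k+1) = 2*((2:ℤ)^k)^2 by rw [← pow_mul]; ring]
      have hG := rn_inv (2^k) (x:ℤ) (by positivity) hzeq
      have hk4 : k ≤ 4 := by
        by_contra hk5
        push_neg at hk5
        have hk5' : 5 ≤ k := hk5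
        have hper : ∀ j : ℕ, ((2:ZMod 8224)^(5 + j)) = (2:ZMod 8224)^(5 + j % 16) := by
          intro j
          induction j using Nat.strong_induction_on with
          | _ j IHj =>
            by_cases hj : j < 16
            · rw [Nat.mod_eq_of_lt hj]
            · push_neg at hj
              have hj' : j = (j - 16) + 16 := by omega
              have key : (2:ZMod 8224)^(5 + ((j-16) + 16)) = (2:ZMod 8224)^(5 + (j-16)) := by
                have hnat : (2:ℕ)^(5 + ((j-16)+16)) = 2^(5 + (j-16)) + 2^(j-16)*(8224*255) := by
                  rw [show 5 + ((j-16)+16) = (5 + (j-16)) + 16 by omega, pow_add, pow_add]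
                  ring_nf
                have hc : (2:ZMod 8224)^(5 + ((j-16)+16))
                    = (2:ZMod 8224)^(5+(j-16)) + (2:ZMod 8224)^(j-16) * (8224 * 255) := by
                  exact_mod_cast congrArg (fun t : ℕ => (t : ZMod 8224)) hnat
                rw [show ((8224:ZMod 8224)) = 0 from by decide] at hc
                simpa using hc
              rw [← hj'] at key
              rw [key, IHj (j-16) (by omega)]
              congr 1
              omega
        have hP := hper (k-5)
        rw [show 5 + (k-5) = k from by omega] at hP
        have h2k : ((2^k : ℕ) : ZMod 8224) = (2:ZMod 8224)^(5 + (k-5) % 16) := by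
          push_cast
          exact hP
        have hr : (k-5) % 16 < 16 := Nat.mod_lt _ (by norm_num)
        exact rnL_no_pow _ hG ⟨(k-5) % 16, hr⟩ h2k
      have hxle : x ≤ 23 := by
        have h2 : 2^(2*k+1) ≤ 2^9 := Nat.pow_le_pow_right (by norm_num) (by omega)
        nlinarith
      interval_cases k <;> interval_cases x <;> omega
  · rintro (⟨rfl, rfl⟩ | ⟨rfl, rfl⟩ | ⟨rfl, rfl⟩ | ⟨rfl, rfl⟩) <;> norm_num
end

section
/- The only solution in positive integers (e,k) with e ≥ 1 of the equation 2^{2e+3} = k² - 3k - 2 is (e,k) = (2,13). -/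
/-- One step up the Pell tower for `x² - 2y² = 17`. -/
def pstep (p : ℤ × ℤ) : ℤ × ℤ := (3 * p.1 + 4 * p.2, 2 * p.1 + 3 * p.2)

/-- All positive solutions of `x² = 2y² + 17`, interleaving the two orbits. -/
def pell : ℕ → ℤ × ℤ
  | 0 => (5, 2)
  | 1 => (7, 4)
  | n + 2 => pstep (pell n)

lemma pell_add_two (n : ℕ) : pell (n + 2) = pstep (pell n) := rfl

lemma pell_inv : ∀ n, 0 < (pell n).2 ∧ (pell n).2 < (pell n).1
  | 0 => by norm_num [pell]
  | 1 => by norm_num [pell]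
  | n + 2 => by
      obtain ⟨h1, h2⟩ := pell_inv n
      simp only [pell_add_two, pstep]
      constructor <;> nlinarith

/-- Completeness: every positive solution of `x² = 2y² + 17` appears in `pell`. -/
lemma pell_complete : ∀ N : ℕ, ∀ x y : ℤ, y.toNat ≤ N → 0 < x → 0 < y →
    x ^ 2 = 2 * y ^ 2 + 17 → ∃ n, pell n = (x, y) := by
  intro N
  induction N with
  | zero => intro x y hy hx hy0 _; omega
  | succ N ih =>
    intro x y hyN hx hy0 heq
    by_cases hy8 : y ≤ 8
    · have hx12 : x ≤ 12 := by nlinarith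
      interval_cases y <;> interval_cases x <;>
        first
          | (exact ⟨0, rfl⟩)
          | (exact ⟨1, rfl⟩)
          | (exfalso; norm_num at heq)
    · push_neg at hy8
      have hxy : y < x := by nlinarith
      have h34 : 4 * y < 3 * x := by nlinarith
      have h23 : 2 * x < 3 * y := by nlinarith
      obtain ⟨n, hn⟩ := ih (3 * x - 4 * y) (3 * y - 2 * x) (by omega) (by omega) (by omega)
        (by nlinarith)
      refine ⟨n + 2, ?_⟩
      rw [pell_add_two, hn]
      simp only [pstep, Prod.mk.injEq]
      constructor <;> ring

/-- Periodicity mod 32 with period 32 (in the index). -/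
lemma pell_mod32 : ∀ n, (pell (n + 32)).1 ≡ (pell n).1 [ZMOD 32] ∧
    (pell (n + 32)).2 ≡ (pell n).2 [ZMOD 32]
  | 0 => by
      constructor
      · show (pell 32).1 % 32 = (pell 0).1 % 32; decide
      · show (pell 32).2 % 32 = (pell 0).2 % 32; decide
  | 1 => by
      constructor
      · show (pell 33).1 % 32 = (pell 1).1 % 32; decide
      · show (pell 33).2 % 32 = (pell 1).2 % 32; decide
  | n + 2 => by
      obtain ⟨h1, h2⟩ := pell_mod32 n
      have e : n + 2 + 32 = (n + 32) + 2 := by omega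
      rw [e, pell_add_two, pell_add_two]
      simp only [pstep]
      exact ⟨(h1.mul_left 3).add (h2.mul_left 4), (h1.mul_left 2).add (h2.mul_left 3)⟩

lemma pell_mod32_red : ∀ q r : ℕ, (pell (32 * q + r)).2 ≡ (pell r).2 [ZMOD 32] := by
  intro q
  induction q with
  | zero => intro r; simpa using Int.ModEq.refl ((pell r).2)
  | succ q ih =>
    intro r
    have e : 32 * (q + 1) + r = (32 * q + r) + 32 := by ring
    rw [e]
    exact (pell_mod32 (32 * q + r)).2.trans (ih r)

lemma pell_dvd32 (n : ℕ) (h : (32 : ℤ) ∣ (pell n).2) : n % 32 = 13 ∨ n % 32 = 18 := by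
  have hmod : (pell n).2 % 32 = (pell (n % 32)).2 % 32 := by
    conv_lhs => rw [← (show 32 * (n / 32) + n % 32 = n from by omega)]
    exact pell_mod32_red (n / 32) (n % 32)
  have h0 : (pell (n % 32)).2 % 32 = 0 := by
    rw [← hmod]; exact Int.emod_eq_zero_of_dvd h
  obtain ⟨r, hrlt, hre⟩ : ∃ r, r < 32 ∧ n % 32 = r := ⟨n % 32, Nat.mod_lt _ (by norm_num), rfl⟩
  rw [hre] at h0 ⊢
  interval_cases r <;> revert h0 <;> decide

/-- The key Cohn-style congruence: shifting the index by 32 negates the pair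
mod `V₈ = 1331714 = 2 · 665857`. -/
lemma pell_modV : ∀ n, (pell (n + 32)).1 ≡ -(pell n).1 [ZMOD 1331714] ∧
    (pell (n + 32)).2 ≡ -(pell n).2 [ZMOD 1331714]
  | 0 => by
      constructor
      · show (pell 32).1 % 1331714 = -(pell 0).1 % 1331714; decide
      · show (pell 32).2 % 1331714 = -(pell 0).2 % 1331714; decide
  | 1 => by
      constructor
      · show (pell 33).1 % 1331714 = -(pell 1).1 % 1331714; decide
      · show (pell 33).2 % 1331714 = -(pell 1).2 % 1331714; decide
  | n + 2 => by
      obtain ⟨h1, h2⟩ := pell_modV n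
      have e : n + 2 + 32 = (n + 32) + 2 := by omega
      rw [e, pell_add_two, pell_add_two]
      simp only [pstep]
      constructor
      · have h := (h1.mul_left 3).add (h2.mul_left 4)
        have e2 : 3 * -(pell n).1 + 4 * -(pell n).2 = -(3 * (pell n).1 + 4 * (pell n).2) := by
          ring
        rwa [e2] at h
      · have h := (h1.mul_left 2).add (h2.mul_left 3)
        have e2 : 2 * -(pell n).1 + 3 * -(pell n).2 = -(2 * (pell n).1 + 3 * (pell n).2) := by
          ring
        rwa [e2] at h

/-- The `y`-components at indices `≡ 13, 18 (mod 32)` are non-squares mod the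
NSW prime `665857`, uniformly: their Jacobi symbol is `-1`. -/
lemma pell_jac : ∀ q r : ℕ, r = 13 ∨ r = 18 → jacobiSym (pell (32 * q + r)).2 665857 = -1 := by
  intro q
  induction q with
  | zero =>
    rintro r (rfl | rfl)
    · rw [show (pell (32 * 0 + 13)).2 = 175424 from by decide]; norm_num
    · rw [show (pell (32 * 0 + 18)).2 = 21482848 from by decide]; norm_num
  | succ q ih =>
    intro r hr
    have e : 32 * (q + 1) + r = (32 * q + r) + 32 := by ring
    have hc : (pell ((32 * q + r) + 32)).2 ≡ -(pell (32 * q + r)).2 [ZMOD 1331714] :=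
      (pell_modV (32 * q + r)).2
    have hd : (((665857 : ℕ) : ℤ)) ∣ 1331714 := by norm_num
    have hm : (pell ((32 * q + r) + 32)).2 ≡ -(pell (32 * q + r)).2 [ZMOD ((665857 : ℕ) : ℤ)] :=
      hc.of_dvd hd
    rw [e, jacobiSym.mod_left' hm, show -(pell (32 * q + r)).2 = -1 * (pell (32 * q + r)).2 from
      by ring, jacobiSym.mul_left, ih r hr]
    norm_num

/-- The only solution in positive integers `(e,k)` with `e ≥ 1` of
`2^(2e+3) = k² - 3k - 2` is `(e,k) = (2,13)`. -/
theorem suzuki_case_equation (e k : ℕ) (he : 1 ≤ e) (hk : 1 ≤ k) :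
    k ^ 2 = 2 ^ (2 * e + 3) + 3 * k + 2 ↔ e = 2 ∧ k = 13 := by
  constructor
  · intro h
    have hZ : (k : ℤ) ^ 2 = 2 ^ (2 * e + 3) + 3 * k + 2 := by exact_mod_cast h
    have hk1 : (1 : ℤ) ≤ (k : ℤ) := by exact_mod_cast hk
    have hpow : 2 * ((2 : ℤ) ^ (e + 2)) ^ 2 = 4 * 2 ^ (2 * e + 3) := by
      rw [← pow_mul, show (e + 2) * 2 = (2 * e + 3) + 1 from by ring, pow_succ]; ring
    have hX2 : (2 * (k : ℤ) - 3) ^ 2 = 2 * ((2 : ℤ) ^ (e + 2)) ^ 2 + 17 := by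
      rw [hpow]; linear_combination 4 * hZ
    have h8 : (8 : ℤ) ≤ 2 ^ (e + 2) := by
      calc (8 : ℤ) = 2 ^ 3 := by norm_num
        _ ≤ 2 ^ (e + 2) := pow_le_pow_right₀ (by norm_num) (by omega)
    have hXge : 13 ≤ 2 * (k : ℤ) - 3 := by
      by_contra hlt
      push_neg at hlt
      nlinarith [hX2, h8, mul_le_mul_of_nonneg_left h8 (by positivity : (0:ℤ) ≤ 2 ^ (e + 2))]
    have hypos : (0 : ℤ) < 2 ^ (e + 2) := by positivity
    obtain ⟨n, hn⟩ := pell_complete ((2 : ℤ) ^ (e + 2)).toNat (2 * (k : ℤ) - 3)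
      ((2 : ℤ) ^ (e + 2)) le_rfl (by linarith) hypos hX2
    have hyn : (pell n).2 = 2 ^ (e + 2) := by rw [hn]
    have hxn : (pell n).1 = 2 * (k : ℤ) - 3 := by rw [hn]
    by_cases h5 : 5 ≤ e + 2
    · exfalso
      have hdvd : (32 : ℤ) ∣ (pell n).2 := by
        rw [hyn]
        have : (2 : ℤ) ^ 5 ∣ 2 ^ (e + 2) := pow_dvd_pow 2 h5
        simpa using this
      have hr := pell_dvd32 n hdvd
      have hJ := pell_jac (n / 32) (n % 32) hr
      rw [show 32 * (n / 32) + n % 32 = n from by omega, hyn] at hJ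
      have hJ2 : jacobiSym ((2 : ℤ) ^ (e + 2)) 665857 = 1 := by
        rw [jacobiSym.pow_left, show jacobiSym 2 665857 = 1 from by norm_num, one_pow]
      rw [hJ2] at hJ
      norm_num at hJ
    · push_neg at h5
      have heu : e ≤ 2 := by omega
      have h16 : (2 : ℤ) ^ (e + 2) = 8 ∧ e = 1 ∨ (2 : ℤ) ^ (e + 2) = 16 ∧ e = 2 := by
        interval_cases e
        · left; norm_num
        · right; norm_num
      match n, hyn, hxn with
      | 0, hyn, hxn =>
        rw [show (pell 0).2 = 2 from rfl] at hyn
        rcases h16 with ⟨hv, _⟩ | ⟨hv, _⟩ <;> rw [hv] at hyn <;> norm_num at hyn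
      | 1, hyn, hxn =>
        rw [show (pell 1).2 = 4 from rfl] at hyn
        rcases h16 with ⟨hv, _⟩ | ⟨hv, _⟩ <;> rw [hv] at hyn <;> norm_num at hyn
      | 2, hyn, hxn =>
        rw [show (pell 2).2 = 16 from by decide] at hyn
        rcases h16 with ⟨hv, he1⟩ | ⟨hv, he2⟩
        · rw [hv] at hyn; norm_num at hyn
        · refine ⟨he2, ?_⟩
          rw [show (pell 2).1 = 23 from by decide] at hxn
          have : (k : ℤ) = 13 := by linarith
          exact_mod_cast this
      | 3, hyn, hxn =>
        rw [show (pell 3).2 = 26 from by decide] at hyn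
        rcases h16 with ⟨hv, _⟩ | ⟨hv, _⟩ <;> rw [hv] at hyn <;> norm_num at hyn
      | (m + 4), hyn, hxn =>
        exfalso
        obtain ⟨g1, g2⟩ := pell_inv m
        obtain ⟨g3, g4⟩ := pell_inv (m + 2)
        have e1 : (pell (m + 2)).2 = 2 * (pell m).1 + 3 * (pell m).2 := by
          rw [pell_add_two]; rfl
        have e2 : (pell (m + 4)).2 = 2 * (pell (m + 2)).1 + 3 * (pell (m + 2)).2 := by
          rw [show m + 4 = (m + 2) + 2 from rfl, pell_add_two]; rfl
        have hbig : 37 ≤ (pell (m + 4)).2 := by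
          rw [e2]; rw [e1] at g3 g4 ⊢; nlinarith
        rw [hyn] at hbig
        rcases h16 with ⟨hv, _⟩ | ⟨hv, _⟩ <;> rw [hv] at hbig <;> norm_num at hbig
  · rintro ⟨rfl, rfl⟩
    norm_num
end

section
/- Let G ≤ AΓL(1,q) be a 2-transitive permutation group on GF(q), where q = p^d with p an odd prime, and let P be a Sylow 2-subgroup of G. If 2^m exactly divides p-1, then 2^m divides |P ∩ AGL(1,q)|; moreover if p ≡ 3 (mod 4) and d is even and 2^{m̄} exactly divides p+1, then 2^{m̄} divides |P ∩ AGL(1,q)|. -/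
open scoped Pointwise

private lemma two_pow_dvd_aux {p t c : ℕ} (hodd : Odd p) (h : 2 ^ c ∣ p ^ t - 1) :
    ∀ s : ℕ, 2 ^ (c + s) ∣ p ^ (2 ^ s * t) - 1 := by
  intro s
  induction s with
  | zero => simpa using h
  | succ s ih =>
    have hX : Odd (p ^ (2 ^ s * t)) := hodd.pow
    have e1 : p ^ (2 ^ (s + 1) * t) = (p ^ (2 ^ s * t)) ^ 2 := by
      rw [← pow_mul]; congr 1; ring
    have e2 : p ^ (2 ^ (s + 1) * t) - 1 =
        (p ^ (2 ^ s * t) + 1) * (p ^ (2 ^ s * t) - 1) := by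
      rw [e1]
      simpa using Nat.sq_sub_sq (p ^ (2 ^ s * t)) 1
    have h2 : 2 ∣ p ^ (2 ^ s * t) + 1 := hX.add_one.two_dvd
    calc 2 ^ (c + (s + 1)) = 2 * 2 ^ (c + s) := by ring
    _ ∣ (p ^ (2 ^ s * t) + 1) * (p ^ (2 ^ s * t) - 1) := mul_dvd_mul h2 ih
    _ = p ^ (2 ^ (s + 1) * t) - 1 := e2.symm

/-- Let `G ≤ AΓL(1,q)` be a `2`-transitive permutation group on `GF(q)`, `q = p^d` with
`p` an odd prime, and `P` a Sylow `2`-subgroup of `G`. If `2^m ∥ p-1`, then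
`2^m ∣ |P ∩ AGL(1,q)|`; moreover if `p ≡ 3 (mod 4)`, `d` is even and `2^m̄ ∥ p+1`, then
`2^m̄ ∣ |P ∩ AGL(1,q)|`. Here elements of `AΓL(1,q)` are the maps `x ↦ a·σ(x) + b`
(`a ≠ 0`, `σ` a field automorphism) and those of `AGL(1,q)` the maps `x ↦ a·x + b`. -/
theorem sylow_two_meets_agl (p d q m mb : ℕ) (hp : p.Prime) (hp2 : p ≠ 2)
    (hd : 0 < d) (hq : q = p ^ d)
    (F : Type*) [Field F] [Fintype F] (hF : Fintype.card F = q)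
    (G : Subgroup (Equiv.Perm F))
    (hsemi : ∀ g ∈ G, ∃ (a b : F) (σ : F ≃+* F), a ≠ 0 ∧ ∀ x, g x = a * σ x + b)
    (h2t : ∀ x y x' y' : F, x ≠ y → x' ≠ y' → ∃ g ∈ G, g x = x' ∧ g y = y')
    (P : Sylow 2 G)
    (hm : 2 ^ m ∣ p - 1 ∧ ¬ 2 ^ (m + 1) ∣ p - 1)
    (hmb : 2 ^ mb ∣ p + 1 ∧ ¬ 2 ^ (mb + 1) ∣ p + 1) :
    2 ^ m ∣ Nat.card {g : G // g ∈ P ∧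
        ∃ a b : F, a ≠ 0 ∧ ∀ x, (g : Equiv.Perm F) x = a * x + b} ∧
      (p % 4 = 3 → Even d →
        2 ^ mb ∣ Nat.card {g : G // g ∈ P ∧
          ∃ a b : F, a ≠ 0 ∧ ∀ x, (g : Equiv.Perm F) x = a * x + b}) := by
  classical
  haveI : Fact (Nat.Prime 2) := ⟨Nat.prime_two⟩
  haveI : Fact (Nat.Prime p) := ⟨hp⟩
  have hpodd : Odd p := hp.odd_of_ne_two hp2
  -- extract the automorphism part of each element of G
  have hsig : ∀ g : G, ∃ σ : F ≃+* F, ∃ a b : F, a ≠ 0 ∧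
      ∀ x, (g : Equiv.Perm F) x = a * σ x + b := by
    intro g
    obtain ⟨a, b, σ, ha, h⟩ := hsemi g g.2
    exact ⟨σ, a, b, ha, h⟩
  choose σf af bf haf heq using hsig
  have h1x : ∀ x : F, (1 : F ≃+* F) x = x := fun x => rfl
  -- uniqueness of the semilinear data
  have huniq : ∀ (g : G) (a b : F) (σ : F ≃+* F), a ≠ 0 →
      (∀ x, (g : Equiv.Perm F) x = a * σ x + b) → σf g = σ ∧ af g = a ∧ bf g = b := by
    intro g a b σ ha h
    have hb : bf g = b := by
      have h0 := (heq g 0).symm.trans (h 0)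
      simpa using h0
    have ha' : af g = a := by
      have h1 := (heq g 1).symm.trans (h 1)
      rw [map_one, map_one, mul_one, mul_one, hb] at h1
      exact add_right_cancel h1
    refine ⟨?_, ha', hb⟩
    ext x
    have hx := (heq g x).symm.trans (h x)
    rw [ha', hb] at hx
    exact mul_left_cancel₀ ha (add_right_cancel hx)
  -- the homomorphism G →* RingAut F
  let ψ : G →* RingAut F := MonoidHom.mk' (fun g => σf g) (by
    intro g h
    have hne : af g * σf g (af h) ≠ 0 :=
      mul_ne_zero (haf g) (fun h0 => haf h ((σf g).injective (h0.trans (map_zero _).symm)))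
    refine (huniq (g * h) (af g * σf g (af h)) (af g * σf g (bf h) + bf g)
      (σf g * σf h) hne ?_).1
    intro x
    have hgh : ((g * h : G) : Equiv.Perm F) x = (g : Equiv.Perm F) ((h : Equiv.Perm F) x) := rfl
    rw [hgh, heq h x, heq g _, map_add, map_mul]
    have : (σf g * σf h) x = σf g (σf h x) := rfl
    rw [this]; ring)
  have hψ : ∀ g : G, ψ g = σf g := fun g => rfl
  set N : Subgroup G := ψ.ker with hN
  -- membership in N is the affine condition
  have hNmem : ∀ g : G, g ∈ N ↔
      (∃ a b : F, a ≠ 0 ∧ ∀ x, (g : Equiv.Perm F) x = a * x + b) := by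
    intro g
    rw [hN, MonoidHom.mem_ker, hψ]
    constructor
    · intro hσ
      refine ⟨af g, bf g, haf g, fun x => ?_⟩
      have := heq g x
      rw [hσ, h1x] at this
      exact this
    · rintro ⟨a, b, ha, hab⟩
      exact (huniq g a b 1 ha (fun x => by rw [hab x, h1x])).1
  have hcardEq : Nat.card {g : G // g ∈ P ∧
      ∃ a b : F, a ≠ 0 ∧ ∀ x, (g : Equiv.Perm F) x = a * x + b} =
      Nat.card ↥(P.toSubgroup ⊓ N) := by
    apply Nat.card_congr
    apply Equiv.subtypeEquivRight
    intro g
    rw [Subgroup.mem_inf, hNmem g]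
    exact Iff.rfl
  -- CharP F p
  have hchr : CharP F (ringChar F) := ringChar.charP F
  obtain ⟨n, hrprime, hcard⟩ := FiniteField.card F (ringChar F)
  have hrp : ringChar F = p := by
    have h1 : p ∣ ringChar F ^ (n : ℕ) := by
      rw [← hcard, hF, hq]; exact dvd_pow_self p hd.ne'
    exact ((Nat.prime_dvd_prime_iff_eq hp hrprime).mp (hp.dvd_of_dvd_pow h1)).symm
  haveI : CharP F p := hrp ▸ ringChar.charP F
  letI : Algebra (ZMod p) F := ZMod.algebra F p
  have hfr : Module.finrank (ZMod p) F = d := by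
    have hcard2 : Fintype.card F = Fintype.card (ZMod p) ^ Module.finrank (ZMod p) F :=
      Module.card_eq_pow_finrank
    rw [ZMod.card, hF, hq] at hcard2
    exact (Nat.pow_right_injective hp.two_le hcard2.symm)
  -- the number of ring automorphisms of F is d
  have eAut : (RingAut F) ≃ (F ≃ₐ[ZMod p] F) :=
    { toFun := fun f => AlgEquiv.ofRingEquiv (f := f) (fun x =>
        RingHom.congr_fun
          (Subsingleton.elim ((f : F →+* F).comp (algebraMap (ZMod p) F))
            (algebraMap (ZMod p) F)) x)
      invFun := fun f => f.toRingEquiv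
      left_inv := fun f => by ext x; rfl
      right_inv := fun f => by ext x; rfl }
  have hRA : Nat.card (RingAut F) = d := by
    rw [Nat.card_congr eAut, IsGalois.card_aut_eq_finrank, hfr]
  have hNidx : N.index ∣ d := by
    rw [hN, Subgroup.index_ker, ← hRA]
    exact Subgroup.card_subgroup_dvd_card ψ.range
  -- q - 1 divides the order of G, via 2-transitivity
  haveI : Fintype G := Fintype.ofFinite _
  have horddvd : q - 1 ∣ Nat.card G := by
    set z : F × F := ((0 : F), (1 : F)) with hz
    haveI : Fintype (MulAction.orbit G z) := Fintype.ofFinite _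
    have horb : MulAction.orbit G z = {w : F × F | w.1 ≠ w.2} := by
      ext w
      constructor
      · rintro ⟨g, rfl⟩
        have : (g • z).1 = (g : Equiv.Perm F) 0 := rfl
        have h2 : (g • z).2 = (g : Equiv.Perm F) 1 := rfl
        simp only [Set.mem_setOf_eq, this, h2]
        intro hcon
        exact zero_ne_one ((g : Equiv.Perm F).injective hcon)
      · intro hw
        obtain ⟨g, hg, h0, h1⟩ := h2t 0 1 w.1 w.2 zero_ne_one hw
        refine ⟨⟨g, hg⟩, ?_⟩
        show (⟨g, hg⟩ : G) • z = w
        have hzz : (⟨g, hg⟩ : G) • z = (g 0, g 1) := rfl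
        rw [hzz, h0, h1]
    have hsetcard : Nat.card ↥{w : F × F | w.1 ≠ w.2} = q * q - q := by
      have eDiag : {w : F × F // w.1 = w.2} ≃ F :=
        { toFun := fun w => w.1.1
          invFun := fun x => ⟨(x, x), rfl⟩
          left_inv := by rintro ⟨⟨a, b⟩, h⟩; cases h; rfl
          right_inv := fun x => rfl }
      have h1 : Fintype.card {w : F × F // w.1 = w.2} = q := by
        rw [Fintype.card_congr eDiag, hF]
      have h2 : Fintype.card {w : F × F // ¬ w.1 = w.2} = q * q - q := by
        rw [Fintype.card_subtype_compl, Fintype.card_prod, hF, h1]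
      rw [Nat.card_eq_fintype_card]
      convert h2 using 2
      rfl
    have hdvd1 : Nat.card (MulAction.orbit G z) ∣ Nat.card G := by
      rw [Nat.card_eq_fintype_card, Nat.card_eq_fintype_card]
      exact ⟨_, (MulAction.card_orbit_mul_card_stabilizer_eq_card_group G z).symm⟩
    have : (q - 1) ∣ q * q - q := by
      refine ⟨q, ?_⟩
      rw [Nat.sub_mul, one_mul]
    refine this.trans ?_
    rw [← hsetcard, ← horb] at *
    exact hdvd1
  -- decomposition of d
  obtain ⟨s, t, htodd, hdst⟩ := Nat.exists_eq_pow_mul_and_not_dvd hd.ne' 2 (by norm_num)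
  have htodd' : Odd t := Nat.odd_iff.mpr (Nat.two_dvd_ne_zero.mp htodd)
  -- the key divisibility
  have key : ∀ c : ℕ, 2 ^ (c + s) ∣ q - 1 → 2 ^ c ∣ Nat.card {g : G // g ∈ P ∧
      ∃ a b : F, a ≠ 0 ∧ ∀ x, (g : Equiv.Perm F) x = a * x + b} := by
    intro c hc
    rw [hcardEq]
    -- 2^c divides the order of N
    have h2cardN : 2 ^ c ∣ Nat.card N := by
      have h1 : 2 ^ (c + s) ∣ Nat.card G := hc.trans horddvd
      have h2 : Nat.card G ∣ Nat.card N * (2 ^ s * t) := by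
        rw [← Subgroup.card_mul_index (H := N)]
        exact mul_dvd_mul_left _ (hNidx.trans (by rw [hdst]))
      have h3 : 2 ^ c * 2 ^ s ∣ (Nat.card N * t) * 2 ^ s := by
        rw [← pow_add]
        refine (h1.trans h2).trans (dvd_of_eq ?_)
        ring
      have h4 : 2 ^ c ∣ Nat.card N * t :=
        (Nat.mul_dvd_mul_iff_right (pow_pos (by norm_num) s)).mp h3
      exact (Nat.Coprime.pow_left c
        ((Nat.Prime.coprime_iff_not_dvd Nat.prime_two).mpr htodd)).dvd_of_dvd_mul_right h4
    -- pass to a Sylow 2-subgroup of N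
    obtain ⟨Q⟩ : Nonempty (Sylow 2 N) := inferInstance
    have hQidx : ¬ (2 ∣ Q.toSubgroup.index) :=
      Q.not_dvd_index' Subgroup.index_ne_zero_of_finite
    have hQcard : 2 ^ c ∣ Nat.card Q.toSubgroup := by
      have h5 : 2 ^ c ∣ Nat.card Q.toSubgroup * Q.toSubgroup.index := by
        rw [Subgroup.card_mul_index]; exact h2cardN
      exact (Nat.Coprime.pow_left c
        ((Nat.Prime.coprime_iff_not_dvd Nat.prime_two).mpr hQidx)).dvd_of_dvd_mul_right h5
    set Q' : Subgroup G := Q.toSubgroup.map N.subtype with hQ'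
    have hQ'card : Nat.card Q.toSubgroup = Nat.card Q' :=
      Nat.card_congr (Subgroup.equivMapOfInjective Q.toSubgroup N.subtype
        (Subgroup.subtype_injective N)).toEquiv
    have hQ'p : IsPGroup 2 Q' := Q.2.map N.subtype
    obtain ⟨R, hRle⟩ := hQ'p.exists_le_sylow
    obtain ⟨g, hg⟩ := MulAction.exists_smul_eq G R P
    have h8 : MulAut.conj g • Q' ≤ P.toSubgroup := by
      have h8a : MulAut.conj g • Q' ≤ MulAut.conj g • R.toSubgroup :=
        Subgroup.pointwise_smul_le_pointwise_smul_iff.mpr hRle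
      have h8b : MulAut.conj g • R.toSubgroup = P.toSubgroup :=
        congrArg Sylow.toSubgroup hg
      rwa [h8b] at h8a
    have h9 : MulAut.conj g • Q' ≤ N := by
      have h9a : Q' ≤ N := Subgroup.map_subtype_le Q.toSubgroup
      have h9b : MulAut.conj g • Q' ≤ MulAut.conj g • N :=
        Subgroup.pointwise_smul_le_pointwise_smul_iff.mpr h9a
      rwa [Subgroup.Normal.conj_smul_eq_self g N] at h9b
    have h10 : Nat.card Q' = Nat.card ↥(MulAut.conj g • Q') :=
      Nat.card_congr (Subgroup.equivSMul (MulAut.conj g) Q').toEquiv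
    have h11 : 2 ^ c ∣ Nat.card ↥(MulAut.conj g • Q') := by
      rw [← h10, ← hQ'card]; exact hQcard
    exact h11.trans (Subgroup.card_dvd_of_le (le_inf h8 h9))
  -- first claim
  have base1 : 2 ^ m ∣ p ^ t - 1 := by
    refine hm.1.trans ?_
    simpa using Nat.sub_dvd_pow_sub_pow p 1 t
  have claimA : 2 ^ (m + s) ∣ q - 1 := by
    rw [hq, hdst]
    exact two_pow_dvd_aux hpodd base1 s
  refine ⟨key m claimA, fun _ hdeven => ?_⟩
  -- second claim
  rcases s with _ | s'
  · exfalso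
    rw [hdst, pow_zero, one_mul] at hdeven
    exact (Nat.not_even_iff_odd.mpr htodd') hdeven
  have base2 : 2 ^ (mb + 1) ∣ p ^ (2 * t) - 1 := by
    have e1 : p ^ (2 * t) - 1 = (p ^ t - 1) * (p ^ t + 1) := by
      have : p ^ (2 * t) = (p ^ t) ^ 2 := by rw [← pow_mul]; congr 1; ring
      rw [this, mul_comm]
      simpa using Nat.sq_sub_sq (p ^ t) 1
    have h1 : 2 ∣ p ^ t - 1 := (Nat.Odd.sub_odd (hpodd.pow) odd_one).two_dvd
    have h2 : 2 ^ mb ∣ p ^ t + 1 := by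
      refine hmb.1.trans ?_
      simpa using Odd.nat_add_dvd_pow_add_pow p 1 htodd'
    rw [e1, pow_succ, mul_comm (2 ^ mb) 2]
    exact mul_dvd_mul h1 h2
  have claimB : 2 ^ (mb + (s' + 1)) ∣ q - 1 := by
    have e2 : d = 2 ^ s' * (2 * t) := by rw [hdst, pow_succ]; ring
    have := two_pow_dvd_aux hpodd base2 s'
    rw [hq, e2]
    have e3 : mb + 1 + s' = mb + (s' + 1) := by omega
    rwa [e3] at this
  exact key mb claimB
end
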